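/- Let G be a locally compact group with left Haar measure, and let T be a bounded operator on L²(G) that commutes with right convolution by all f ∈ C_c(G) (i.e., T(φ*f) = (Tφ)*f). If T restricts to a bounded adjointable operator on the right Hilbert C*_r(G)-module completion of C_c(G) with norm ‖T‖_{C*_r→C*_r}, and is bounded on L²(G) with norm ‖T‖_{L²→L²}, then ‖T‖_{C*_r→C*_r} ≤ ‖T‖_{L²→L²}. -/

import Mathlib

open scoped Topology


open MeasureTheory
open scoped ENNReal

noncomputable section

/-- The predicate describing members of `C_c(G)`: continuous, compactly supported functions. -/
def IsCc {G : Type*} [TopologicalSpace G] (f : G → ℂ) : Prop :=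
  Continuous f ∧ HasCompactSupport f

/-- Convolution of two functions on a group with respect to a (left Haar) measure. -/
def convOn {G : Type*} [Group G] [MeasurableSpace G] (μ : Measure G)
    (f h : G → ℂ) : G → ℂ :=
  fun x => ∫ y, f y * h (y⁻¹ * x) ∂μ

/-- The reduced (`C*_r(G)`-) norm of a function `f`: the supremum of `‖f ⋆ h‖_{L²}` over all
`h ∈ C_c(G)` with `‖h‖_{L²} = 1`. -/
def reducedNorm {G : Type*} [Group G] [TopologicalSpace G] [MeasurableSpace G]
    (μ : Measure G) (f : G → ℂ) : ℝ≥0∞ :=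
  ⨆ h : {h : G → ℂ // IsCc h ∧ eLpNorm h 2 μ = 1}, eLpNorm (convOn μ f h.1) 2 μ

open scoped Pointwise in
/-- The convolution of two continuous compactly supported functions is continuous and
compactly supported. -/
lemma isCc_convOn {G : Type*} [Group G] [TopologicalSpace G] [IsTopologicalGroup G]
    [MeasurableSpace G] [BorelSpace G]
    (μ : Measure G) [μ.IsHaarMeasure] {f h : G → ℂ}
    (hf : IsCc f) (hh : IsCc h) : IsCc (convOn μ f h) := by
  have hmeas : ∀ x : G, Integrable (fun y => f y * h (y⁻¹ * x)) μ := fun x =>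
    (hf.1.mul (hh.1.comp (continuous_inv.mul continuous_const))).integrable_of_hasCompactSupport
      hf.2.mul_right
  have hIntNorm : Integrable (fun y => ‖f y‖) μ :=
    hf.1.norm.integrable_of_hasCompactSupport hf.2.norm
  set I := ∫ y, ‖f y‖ ∂μ with hIdef
  have hI0 : 0 ≤ I := integral_nonneg fun y => norm_nonneg _
  letI : UniformSpace G := IsTopologicalGroup.rightUniformSpace G
  have hguc : UniformContinuous (fun y : G => h y⁻¹) :=
    HasCompactSupport.uniformContinuous_of_continuous
      (hh.2.comp_homeomorph (Homeomorph.inv G)) (hh.1.comp continuous_inv)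
  constructor
  · rw [continuous_iff_continuousAt]
    intro x₀
    rw [ContinuousAt, Metric.tendsto_nhds]
    intro ε hε
    set δ := ε / (I + 1) with hδdef
    have hδ0 : 0 < δ := div_pos hε (by linarith)
    have h2 := hguc (Metric.dist_mem_uniformity hδ0)
    rw [Filter.mem_map, uniformity_eq_comap_nhds_one', Filter.mem_comap] at h2
    obtain ⟨U, hU, hUsub⟩ := h2
    have hcont : Filter.Tendsto (fun x : G => x₀⁻¹ * x) (𝓝 x₀) (𝓝 (1 : G)) := by
      have := (continuous_const.mul continuous_id : Continuous fun x : G => x₀⁻¹ * x).tendsto x₀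
      simpa using (continuous_mul_left x₀⁻¹).tendsto x₀
    filter_upwards [hcont.eventually_mem hU] with x hxU
    have key : ∀ y : G, ‖f y * h (y⁻¹ * x) - f y * h (y⁻¹ * x₀)‖ ≤ ‖f y‖ * δ := by
      intro y
      rw [← mul_sub, norm_mul]
      refine mul_le_mul_of_nonneg_left ?_ (norm_nonneg _)
      have hpair : ((x⁻¹ * y, x₀⁻¹ * y) : G × G) ∈ (fun p : G × G => p.2 / p.1) ⁻¹' U := by
        have : (x₀⁻¹ * y) / (x⁻¹ * y) = x₀⁻¹ * x := by
          rw [div_eq_mul_inv, mul_inv_rev, inv_inv, mul_assoc, mul_inv_cancel_left]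
        simpa [this] using hxU
      have hd := hUsub (show ((x⁻¹ * y, x₀⁻¹ * y) : G × G) ∈ (fun p : G × G => p.2 * p.1⁻¹) ⁻¹' U by
        simpa only [Set.mem_preimage, div_eq_mul_inv] using hpair)
      simp only [Set.mem_preimage, Set.mem_setOf_eq, mul_inv_rev, inv_inv] at hd
      rw [← dist_eq_norm]
      exact le_of_lt (by simpa [dist_comm] using hd)
    calc dist (convOn μ f h x) (convOn μ f h x₀)
        = ‖(∫ y, f y * h (y⁻¹ * x) ∂μ) - ∫ y, f y * h (y⁻¹ * x₀) ∂μ‖ := dist_eq_norm _ _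
      _ = ‖∫ y, (f y * h (y⁻¹ * x) - f y * h (y⁻¹ * x₀)) ∂μ‖ := by
          rw [integral_sub (hmeas x) (hmeas x₀)]
      _ ≤ ∫ y, ‖f y‖ * δ ∂μ :=
          norm_integral_le_of_norm_le (hIntNorm.mul_const δ) (Filter.Eventually.of_forall key)
      _ = I * δ := by rw [integral_mul_const]
      _ < ε := by
          rw [hδdef, mul_div_assoc']
          rw [div_lt_iff₀ (by linarith : (0:ℝ) < I + 1)]
          nlinarith
  · have hKK : IsCompact (closure (tsupport f * tsupport h)) := (hf.2.mul hh.2).closure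
    apply IsCompact.of_isClosed_subset hKK (isClosed_tsupport _)
    apply closure_minimal ?_ isClosed_closure
    intro x hx
    apply subset_closure
    by_contra hmem
    apply hx
    have hzero : ∀ y, f y * h (y⁻¹ * x) = 0 := by
      intro y
      by_cases hfy : f y = 0
      · simp [hfy]
      · by_cases hhy : h (y⁻¹ * x) = 0
        · simp [hhy]
        · exfalso
          apply hmem
          have h1 : y ∈ tsupport f := subset_tsupport f hfy
          have h2 : y⁻¹ * x ∈ tsupport h := subset_tsupport h hhy
          have := Set.mul_mem_mul h1 h2
          simpa [mul_assoc] using this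
    show convOn μ f h x = 0
    simp only [convOn, hzero, integral_zero]
  
/-- Let `G` be a locally compact group with left Haar measure `μ` and let `T`
be a linear operator on `C_c(G)` commuting with right convolution by every `f ∈ C_c(G)`.
If `T` is bounded for the `L²`-norm, with bound `C`, then `T` is bounded with the same bound
`C` for the reduced `C*_r(G)`-norm; in particular `‖T‖_{C*_r → C*_r} ≤ ‖T‖_{L² → L²}`. -/
theorem stmt_0 {G : Type*} [Group G] [TopologicalSpace G] [IsTopologicalGroup G]
    [LocallyCompactSpace G] [MeasurableSpace G] [BorelSpace G]
    (μ : Measure G) [μ.IsHaarMeasure]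
    (T : (G → ℂ) →ₗ[ℂ] (G → ℂ))
    (hTcc : ∀ f, IsCc f → IsCc (T f))
    (hTcommute : ∀ φ f : G → ℂ, IsCc φ → IsCc f →
      T (convOn μ φ f) = convOn μ (T φ) f)
    (C : ℝ≥0∞)
    (hL2bound : ∀ φ : G → ℂ, IsCc φ → eLpNorm (T φ) 2 μ ≤ C * eLpNorm φ 2 μ) :
    ∀ f : G → ℂ, IsCc f → reducedNorm μ (T f) ≤ C * reducedNorm μ f := by
  intro f hf
  rw [reducedNorm]
  apply iSup_le
  rintro ⟨h, hh, hnorm⟩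
  have hconv : IsCc (convOn μ f h) := isCc_convOn μ hf hh
  rw [← hTcommute f h hf hh]
  calc eLpNorm (T (convOn μ f h)) 2 μ ≤ C * eLpNorm (convOn μ f h) 2 μ := hL2bound _ hconv
    _ ≤ C * reducedNorm μ f := by
        apply mul_le_mul_right
        exact le_iSup (fun h' : {h : G → ℂ // IsCc h ∧ eLpNorm h 2 μ = 1} =>
          eLpNorm (convOn μ f h'.1) 2 μ) ⟨h, hh, hnorm⟩
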